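/- There is no cut-free proof of the sequent !(X ⅋ X) ⊢ ?(X ⊗ X) in the sequent calculus ILC_ι; consequently ILC_ι does not enjoy cut-elimination. -/

import Mathlib

set_option autoImplicit true

/-- Formulas of intuitionistic linear logic extended (ILL^e). -/
inductive LF : Type
  | var : ℕ → LF
  | top : LF
  | bot : LF
  | one : LF
  | zero : LF
  | tensor : LF → LF → LF
  | par : LF → LF → LF
  | withc : LF → LF → LF
  | plus : LF → LF → LF
  | neg : LF → LF
  | ofc : LF → LF
  | wn : LF → LF

/-- `ILC c w Δ Γ` : the sequent `Δ ⊢ Γ` is provable, where the flag `c`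
permits the Cut rule and the flag `w` permits the two weakly distributive
rules.  Thus `ILC true false` is provability in ILC and `ILC true true` is
provability in ILC_ι. -/
inductive ILC : Bool → Bool → List LF → List LF → Prop
  | xl : ILC c w (Δ ++ A :: A' :: Δ') Γ → ILC c w (Δ ++ A' :: A :: Δ') Γ
  | xr : ILC c w Δ (Γ ++ B :: B' :: Γ') → ILC c w Δ (Γ ++ B' :: B :: Γ')
  | ocW : ILC c w Δ Γ → ILC c w (Δ ++ [LF.ofc A]) Γ
  | wnW : ILC c w Δ Γ → ILC c w Δ (LF.wn B :: Γ)
  | ocC : ILC c w (Δ ++ [LF.ofc A, LF.ofc A]) Γ → ILC c w (Δ ++ [LF.ofc A]) Γ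
  | wnC : ILC c w Δ (LF.wn B :: LF.wn B :: Γ) → ILC c w Δ (LF.wn B :: Γ)
  | ocD : ILC c w (Δ ++ [A]) Γ → ILC c w (Δ ++ [LF.ofc A]) Γ
  | wnD : ILC c w Δ (B :: Γ) → ILC c w Δ (LF.wn B :: Γ)
  | wnL : ILC c w (List.map LF.ofc Δ ++ [A]) (List.map LF.wn Γ) →
      ILC c w (List.map LF.ofc Δ ++ [LF.wn A]) (List.map LF.wn Γ)
  | ocR : ILC c w (List.map LF.ofc Δ) (B :: List.map LF.wn Γ) →
      ILC c w (List.map LF.ofc Δ) (LF.ofc B :: List.map LF.wn Γ)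
  | id : ILC c w [A] [A]
  | cut : ILC true w Δ (B :: Γ) → ILC true w (Δ' ++ [B]) Γ' →
      ILC true w (Δ ++ Δ') (Γ ++ Γ')
  | oneR : ILC c w Δ (LF.one :: Γ)
  | zeroL : ILC c w (Δ ++ [LF.zero]) Γ
  | topL : ILC c w Δ Γ → ILC c w (Δ ++ [LF.top]) Γ
  | topR : ILC c w [] [LF.top]
  | botL : ILC c w [LF.bot] []
  | botR : ILC c w Δ Γ → ILC c w Δ (LF.bot :: Γ)
  | tensorL : ILC c w (Δ ++ [A₁, A₂]) Γ → ILC c w (Δ ++ [LF.tensor A₁ A₂]) Γ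
  | tensorR : ILC c w Δ₁ (B₁ :: Γ₁) → ILC c w Δ₂ (B₂ :: Γ₂) →
      ILC c w (Δ₁ ++ Δ₂) (LF.tensor B₁ B₂ :: (Γ₁ ++ Γ₂))
  | withL₁ : ILC c w (Δ ++ [A₁]) Γ → ILC c w (Δ ++ [LF.withc A₁ A₂]) Γ
  | withL₂ : ILC c w (Δ ++ [A₂]) Γ → ILC c w (Δ ++ [LF.withc A₁ A₂]) Γ
  | withR : ILC c w Δ (B₁ :: Γ) → ILC c w Δ (B₂ :: Γ) → ILC c w Δ (LF.withc B₁ B₂ :: Γ)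
  | parL : ILC c w (Δ₁ ++ [A₁]) Γ₁ → ILC c w (Δ₂ ++ [A₂]) Γ₂ →
      ILC c w (Δ₁ ++ Δ₂ ++ [LF.par A₁ A₂]) (Γ₁ ++ Γ₂)
  | parR : ILC c w Δ (B₁ :: B₂ :: Γ) → ILC c w Δ (LF.par B₁ B₂ :: Γ)
  | plusL : ILC c w (Δ ++ [A₁]) Γ → ILC c w (Δ ++ [A₂]) Γ → ILC c w (Δ ++ [LF.plus A₁ A₂]) Γ
  | plusR₁ : ILC c w Δ (B₁ :: Γ) → ILC c w Δ (LF.plus B₁ B₂ :: Γ)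
  | plusR₂ : ILC c w Δ (B₂ :: Γ) → ILC c w Δ (LF.plus B₁ B₂ :: Γ)
  | negL : ILC c w Δ (B :: Γ) → ILC c w (Δ ++ [LF.neg B]) Γ
  | negR : ILC c w (Δ ++ [A]) Γ → ILC c w Δ (LF.neg A :: Γ)
  | ocwnL : ILC c true (List.map LF.ofc Δ ++ [LF.ofc A]) (List.map LF.wn Γ) →
      ILC c true (List.map LF.ofc Δ ++ [LF.ofc (LF.wn A)]) (List.map LF.wn Γ)
  | wnocR : ILC c true (List.map LF.ofc Δ) (LF.wn B :: List.map LF.wn Γ) →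
      ILC c true (List.map LF.ofc Δ) (LF.wn (LF.ofc B) :: List.map LF.wn Γ)

def isAtom : LF → Bool
  | LF.var _ => true
  | _ => false

def nv (l : List LF) : ℕ := l.countP isAtom

lemma key (v : ℕ) : ∀ (b w : Bool) (Δ Γ : List LF), ILC b w Δ Γ → b = false →
    (∀ A ∈ Δ, A = LF.ofc (LF.par (LF.var v) (LF.var v)) ∨
        A = LF.par (LF.var v) (LF.var v) ∨ A = LF.var v) →
    (∀ A ∈ Γ, A = LF.wn (LF.tensor (LF.var v) (LF.var v)) ∨
        A = LF.tensor (LF.var v) (LF.var v) ∨ A = LF.var v) →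
    nv Δ + nv Γ = 2 := by
  intro b w Δ Γ h
  induction h with
  | xl h ih =>
      intro hb hL hR
      have H := ih hb (fun B hB => hL B (by
        simp only [List.mem_append, List.mem_cons] at hB ⊢; tauto)) hR
      simp [nv, List.countP_append, List.countP_cons, List.countP_nil] at H ⊢
      omega
  | xr h ih =>
      intro hb hL hR
      have H := ih hb hL (fun B hB => hR B (by
        simp only [List.mem_append, List.mem_cons] at hB ⊢; tauto))
      simp [nv, List.countP_append, List.countP_cons, List.countP_nil] at H ⊢
      omega
  | ocW h ih =>
      intro hb hL hR
      have H := ih hb (fun B hB => hL B (List.mem_append_left _ hB)) hR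
      simp [nv, List.countP_append, List.countP_cons, List.countP_nil, isAtom] at H ⊢
      omega
  | wnW h ih =>
      intro hb hL hR
      have H := ih hb hL (fun B hB => hR B (List.mem_cons_of_mem _ hB))
      simp [nv, List.countP_append, List.countP_cons, List.countP_nil, isAtom] at H ⊢
      omega
  | ocC h ih =>
      intro hb hL hR
      have H := ih hb (fun B hB => by
        rcases List.mem_append.1 hB with h' | h'
        · exact hL B (List.mem_append_left _ h')
        · simp only [List.mem_cons, List.mem_singleton, List.not_mem_nil, or_false] at h'
          rcases h' with rfl | rfl <;>
            exact hL _ (List.mem_append_right _ (List.mem_singleton_self _))) hR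
      simp [nv, List.countP_append, List.countP_cons, List.countP_nil, isAtom] at H ⊢
      omega
  | wnC h ih =>
      intro hb hL hR
      have H := ih hb hL (fun B hB => by
        rcases List.mem_cons.1 hB with rfl | h'
        · exact hR _ List.mem_cons_self
        · exact hR B h')
      simp [nv, List.countP_append, List.countP_cons, List.countP_nil, isAtom] at H ⊢
      omega
  | ocD h ih =>
      intro hb hL hR
      have hp := hL _ (List.mem_append_right _ (List.mem_singleton_self _))
      simp only [LF.ofc.injEq] at hp
      rcases hp with hp | hp | hp
      · subst hp
        have H := ih hb (fun B hB => by
          rcases List.mem_append.1 hB with h' | h'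
          · exact hL B (List.mem_append_left _ h')
          · simp only [List.mem_singleton] at h'; subst h'; right; left; rfl) hR
        simp [nv, List.countP_append, List.countP_cons, List.countP_nil, isAtom] at H ⊢
        omega
      · exact absurd hp (by simp)
      · exact absurd hp (by simp)
  | wnD h ih =>
      intro hb hL hR
      have hp := hR _ List.mem_cons_self
      simp only [LF.wn.injEq] at hp
      rcases hp with hp | hp | hp
      · subst hp
        have H := ih hb hL (fun B hB => by
          rcases List.mem_cons.1 hB with rfl | h'
          · right; left; rfl
          · exact hR B (List.mem_cons_of_mem _ h'))
        simp [nv, List.countP_append, List.countP_cons, List.countP_nil, isAtom] at H ⊢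
        omega
      · exact absurd hp (by simp)
      · exact absurd hp (by simp)
  | wnL h ih =>
      intro hb hL hR
      have := hL _ (List.mem_append_right _ (List.mem_singleton_self _))
      simp at this
  | ocR h ih =>
      intro hb hL hR
      have := hR _ List.mem_cons_self
      simp at this
  | id =>
      intro hb hL hR
      have h1 := hL _ (List.mem_singleton_self _)
      rcases hR _ (List.mem_singleton_self _) with rfl | rfl | rfl
      · simp at h1
      · simp at h1
      · simp [nv, List.countP_cons, List.countP_nil, isAtom]
  | cut h1 h2 ih1 ih2 =>
      intro hb
      exact absurd hb (by simp)
  | oneR =>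
      intro hb hL hR
      have := hR _ List.mem_cons_self
      simp at this
  | zeroL =>
      intro hb hL hR
      have := hL _ (List.mem_append_right _ (List.mem_singleton_self _))
      simp at this
  | topL h ih =>
      intro hb hL hR
      have := hL _ (List.mem_append_right _ (List.mem_singleton_self _))
      simp at this
  | topR =>
      intro hb hL hR
      have := hR _ (List.mem_singleton_self _)
      simp at this
  | botL =>
      intro hb hL hR
      have := hL _ (List.mem_singleton_self _)
      simp at this
  | botR h ih =>
      intro hb hL hR
      have := hR _ List.mem_cons_self
      simp at this
  | tensorL h ih =>
      intro hb hL hR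
      have := hL _ (List.mem_append_right _ (List.mem_singleton_self _))
      simp at this
  | tensorR h1 h2 ih1 ih2 =>
      intro hb hL hR
      have hp := hR _ List.mem_cons_self
      simp only [LF.tensor.injEq] at hp
      rcases hp with hp | ⟨hp1, hp2⟩ | hp
      · exact absurd hp (by simp)
      · subst hp1; subst hp2
        have H1 := ih1 hb (fun B hB => hL B (List.mem_append_left _ hB))
          (fun B hB => by
            rcases List.mem_cons.1 hB with rfl | h'
            · right; right; rfl
            · exact hR B (List.mem_cons_of_mem _ (List.mem_append_left _ h')))
        have H2 := ih2 hb (fun B hB => hL B (List.mem_append_right _ hB))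
          (fun B hB => by
            rcases List.mem_cons.1 hB with rfl | h'
            · right; right; rfl
            · exact hR B (List.mem_cons_of_mem _ (List.mem_append_right _ h')))
        simp [nv, List.countP_append, List.countP_cons, List.countP_nil, isAtom] at H1 H2 ⊢
        omega
      · exact absurd hp (by simp)
  | withL₁ h ih =>
      intro hb hL hR
      have := hL _ (List.mem_append_right _ (List.mem_singleton_self _))
      simp at this
  | withL₂ h ih =>
      intro hb hL hR
      have := hL _ (List.mem_append_right _ (List.mem_singleton_self _))
      simp at this
  | withR h1 h2 ih1 ih2 =>
      intro hb hL hR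
      have := hR _ List.mem_cons_self
      simp at this
  | parL h1 h2 ih1 ih2 =>
      intro hb hL hR
      have hp := hL _ (List.mem_append_right _ (List.mem_singleton_self _))
      simp only [LF.par.injEq] at hp
      rcases hp with hp | ⟨hp1, hp2⟩ | hp
      · exact absurd hp (by simp)
      · subst hp1; subst hp2
        have H1 := ih1 hb (fun B hB => by
            rcases List.mem_append.1 hB with h' | h'
            · exact hL B (List.mem_append_left _ (List.mem_append_left _ h'))
            · simp only [List.mem_singleton] at h'; subst h'; right; right; rfl)
          (fun B hB => hR B (List.mem_append_left _ hB))
        have H2 := ih2 hb (fun B hB => by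
            rcases List.mem_append.1 hB with h' | h'
            · exact hL B (List.mem_append_left _ (List.mem_append_right _ h'))
            · simp only [List.mem_singleton] at h'; subst h'; right; right; rfl)
          (fun B hB => hR B (List.mem_append_right _ hB))
        simp [nv, List.countP_append, List.countP_cons, List.countP_nil, isAtom] at H1 H2 ⊢
        omega
      · exact absurd hp (by simp)
  | parR h ih =>
      intro hb hL hR
      have := hR _ List.mem_cons_self
      simp at this
  | plusL h1 h2 ih1 ih2 =>
      intro hb hL hR
      have := hL _ (List.mem_append_right _ (List.mem_singleton_self _))
      simp at this
  | plusR₁ h ih =>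
      intro hb hL hR
      have := hR _ List.mem_cons_self
      simp at this
  | plusR₂ h ih =>
      intro hb hL hR
      have := hR _ List.mem_cons_self
      simp at this
  | negL h ih =>
      intro hb hL hR
      have := hL _ (List.mem_append_right _ (List.mem_singleton_self _))
      simp at this
  | negR h ih =>
      intro hb hL hR
      have := hR _ List.mem_cons_self
      simp at this
  | ocwnL h ih =>
      intro hb hL hR
      have := hL _ (List.mem_append_right _ (List.mem_singleton_self _))
      simp at this
  | wnocR h ih =>
      intro hb hL hR
      have := hR _ List.mem_cons_self
      simp at this

lemma cut_proof (v : ℕ) :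
    ILC true true [LF.ofc (LF.par (LF.var v) (LF.var v))]
      [LF.wn (LF.tensor (LF.var v) (LF.var v))] := by
  set X' : LF := LF.var v with hX'
  set P : LF := LF.par X' X' with hP
  set T : LF := LF.tensor X' X' with hT
  set oP : LF := LF.ofc P with hoP
  set oX : LF := LF.ofc X' with hoX
  set wX : LF := LF.wn X' with hwX
  set woX : LF := LF.wn oX with hwoX
  set wT : LF := LF.wn T with hwT
  set D : LF := LF.par woX woX with hD
  set nD : LF := LF.neg D with hnD
  have i1 : ILC true true [X'] [X'] := ILC.id
  have a2 : ILC true true [X', oP] [X'] := ILC.ocW (Δ := [X']) (A := P) i1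
  have a3 : ILC true true [oP, X'] [X'] :=
    ILC.xl (Δ := []) (A := X') (A' := oP) (Δ' := []) a2
  have a5 : ILC true true [oP, X', X'] [T] :=
    ILC.tensorR (Δ₁ := [oP, X']) (B₁ := X') (Γ₁ := []) (Δ₂ := [X']) (B₂ := X') (Γ₂ := []) a3 i1
  have a6 : ILC true true [oP, X', X'] [wT] := ILC.wnD (B := T) (Γ := []) a5
  have a7 : ILC true true [oP, X', oX] [wT] := ILC.ocD (Δ := [oP, X']) (A := X') a6
  have a8 : ILC true true [oP, oX, X'] [wT] :=
    ILC.xl (Δ := [oP]) (A := X') (A' := oX) (Δ' := []) a7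
  have a9 : ILC true true [oP, oX, oX] [wT] := ILC.ocD (Δ := [oP, oX]) (A := X') a8
  have A0 : ILC true true [oP, oX] [wT] := ILC.ocC (Δ := [oP]) (A := X') a9
  have α0 : ILC true true [oP, woX] [wT] := ILC.wnL (Δ := [P]) (A := oX) (Γ := [T]) A0
  have α1 : ILC true true [oP, oP, D] [wT, wT] :=
    ILC.parL (Δ₁ := [oP]) (A₁ := woX) (Γ₁ := [wT]) (Δ₂ := [oP]) (A₂ := woX) (Γ₂ := [wT]) α0 α0
  have α2 : ILC true true [oP, D, oP] [wT, wT] :=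
    ILC.xl (Δ := [oP]) (A := oP) (A' := D) (Δ' := []) α1
  have α3 : ILC true true [D, oP, oP] [wT, wT] :=
    ILC.xl (Δ := []) (A := oP) (A' := D) (Δ' := [oP]) α2
  have α4 : ILC true true [D, oP] [wT, wT] := ILC.ocC (Δ := [D]) (A := P) α3
  have α5 : ILC true true [oP, D] [wT, wT] :=
    ILC.xl (Δ := []) (A := D) (A' := oP) (Δ' := []) α4
  have p1 : ILC true true [oP] [nD, wT, wT] :=
    ILC.negR (Δ := [oP]) (A := D) (Γ := [wT, wT]) α5
  have b1 : ILC true true [X'] [wX] := ILC.wnD (B := X') (Γ := []) i1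
  have b2 : ILC true true [P] [wX, wX] :=
    ILC.parL (Δ₁ := []) (A₁ := X') (Γ₁ := [wX]) (Δ₂ := []) (A₂ := X') (Γ₂ := [wX]) b1 b1
  have b3 : ILC true true [oP] [wX, wX] := ILC.ocD (Δ := []) (A := P) b2
  have b4 : ILC true true [oP] [woX, wX] :=
    ILC.wnocR (Δ := [P]) (B := X') (Γ := [X']) b3
  have b5 : ILC true true [oP] [wX, woX] :=
    ILC.xr (Γ := []) (B := woX) (B' := wX) (Γ' := []) b4
  have b6 : ILC true true [oP] [woX, woX] :=
    ILC.wnocR (Δ := [P]) (B := X') (Γ := [oX]) b5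
  have b7 : ILC true true [oP] [D] := ILC.parR (B₁ := woX) (B₂ := woX) (Γ := []) b6
  have p2 : ILC true true [oP, nD] [] := ILC.negL (Δ := [oP]) (B := D) (Γ := []) b7
  have c1 : ILC true true [oP, oP] [wT, wT] :=
    ILC.cut (Δ := [oP]) (B := nD) (Γ := [wT, wT]) (Δ' := [oP]) (Γ' := []) p1 p2
  have c2 : ILC true true [oP, oP] [wT] := ILC.wnC (B := T) (Γ := []) c1
  exact ILC.ocC (Δ := []) (A := P) c2

/-- There is no cut-free proof of `!(X ⅋ X) ⊢ ?(X ⊗ X)` in ILC_ι; consequently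
ILC_ι does not enjoy cut-elimination. -/
theorem ilc_iota_no_cut_elimination (X : ℕ) :
    (¬ ILC false true [LF.ofc (LF.par (LF.var X) (LF.var X))]
        [LF.wn (LF.tensor (LF.var X) (LF.var X))]) ∧
    ¬ (∀ (Δ Γ : List LF), ILC true true Δ Γ → ILC false true Δ Γ) := by
  have hneg : ¬ ILC false true [LF.ofc (LF.par (LF.var X) (LF.var X))]
      [LF.wn (LF.tensor (LF.var X) (LF.var X))] := by
    intro h
    have hk := key X false true _ _ h rfl
      (by intro A hA; simp only [List.mem_singleton] at hA; subst hA; left; rfl)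
      (by intro A hA; simp only [List.mem_singleton] at hA; subst hA; left; rfl)
    simp [nv, List.countP_cons, isAtom] at hk
  exact ⟨hneg, fun hce => hneg (hce _ _ (cut_proof X))⟩
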